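/- arXiv:2103.03556 — 4 statements merged into one kernel-verified Lean document; each statement's English description precedes it below -/
import Mathlib

section
/- Weyl's perturbation inequality: if A and P are n×n real symmetric matrices, and M = A + P, then for each i, the i-th smallest eigenvalue μ_i of M and the i-th smallest eigenvalue λ_i of A satisfy |μ_i - λ_i| ≤ ‖P‖, where ‖P‖ is the operator (spectral) norm of P. -/
open Matrix Polynomial Module

variable {n : ℕ}

lemma isSymm_isHermitian {A : Matrix (Fin n) (Fin n) ℝ} (h : A.IsSymm) : A.IsHermitian := by
  ext i j
  simpa using congrFun (congrFun h i) j

lemma charpoly_unitary_conj (U : Matrix.unitaryGroup (Fin n) ℝ)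
    (D : Matrix (Fin n) (Fin n) ℝ) :
    ((U : Matrix (Fin n) (Fin n) ℝ) * D * star (U : Matrix (Fin n) (Fin n) ℝ)).charpoly
      = D.charpoly := by
  set U' : Matrix (Fin n) (Fin n) ℝ := (U : Matrix (Fin n) (Fin n) ℝ) with hU'def
  have hU : U' * star U' = 1 := (Matrix.mem_unitaryGroup_iff).mp U.2
  have key : charmatrix (U' * D * star U')
      = (U'.map C) * charmatrix D * ((star U').map C) := by
    unfold charmatrix
    simp only [RingHom.mapMatrix_apply]
    rw [mul_sub, sub_mul]
    congr 1
    · have h1 : U'.map C * Matrix.scalar (Fin n) (X : ℝ[X]) = Matrix.scalar (Fin n) X * U'.map C := by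
        rw [Matrix.scalar_commute X (fun r => Commute.all X r) (U'.map C)]
      rw [h1, mul_assoc, ← Matrix.map_mul, hU, Matrix.map_one _ (map_zero C) (map_one C), mul_one]
    · rw [← Matrix.map_mul, ← Matrix.map_mul]
  rw [Matrix.charpoly, Matrix.charpoly, key, det_mul, det_mul]
  have : (U'.map C).det * ((star U').map C).det = 1 := by
    rw [mul_comm, ← det_mul, ← Matrix.map_mul]
    have hU2 : star U' * U' = 1 := (Matrix.mem_unitaryGroup_iff').mp U.2
    rw [hU2, Matrix.map_one _ (map_zero C) (map_one C), det_one]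
  calc (U'.map C).det * (charmatrix D).det * ((star U').map C).det
      = (U'.map C).det * ((star U').map C).det * (charmatrix D).det := by ring
    _ = (charmatrix D).det := by rw [this, one_mul]

lemma roots_charpoly_hermitian {A : Matrix (Fin n) (Fin n) ℝ} (hA : A.IsHermitian) :
    A.charpoly.roots = Finset.univ.val.map hA.eigenvalues := by
  have h1 : A.charpoly = (Matrix.diagonal hA.eigenvalues).charpoly := by
    conv_lhs => rw [hA.spectral_theorem]
    rw [Unitary.conjStarAlgAut_apply, charpoly_unitary_conj]
    congr 1
  rw [h1, Matrix.charpoly_of_upperTriangular _ (Matrix.blockTriangular_diagonal _)]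
  have h2 : ∏ i : Fin n, (X - C ((Matrix.diagonal hA.eigenvalues) i i))
      = ((Finset.univ.val.map hA.eigenvalues).map fun a => X - C a).prod := by
    rw [Multiset.map_map]
    rw [Finset.prod_eq_multiset_prod]
    congr 1
    apply Multiset.map_congr rfl
    intro i _
    simp
  rw [h2, roots_multiset_prod_X_sub_C]

lemma exists_perm_comp {f g : Fin n → ℝ} (hg : Monotone g)
    (h : (List.ofFn g : Multiset ℝ) = (List.ofFn f : Multiset ℝ)) :
    ∃ σ : Equiv.Perm (Fin n), g = f ∘ σ := by
  refine ⟨Tuple.sort f, ?_⟩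
  have hperm : List.Perm (List.ofFn g) (List.ofFn (f ∘ Tuple.sort f)) :=
    (Multiset.coe_eq_coe.mp h).trans ((Tuple.sort f).ofFn_comp_perm f).symm
  have heq := List.Perm.eq_of_sortedLE (List.sortedLE_ofFn_iff.mpr hg)
    (List.sortedLE_ofFn_iff.mpr (Tuple.monotone_sort f)) hperm
  exact List.ofFn_injective heq

local notation "⟪" x ", " y "⟫" => @inner ℝ _ _ x y

lemma euc_inner_eq (x y : EuclideanSpace ℝ (Fin n)) : ⟪x, y⟫ = ∑ j, x j * y j := by
  simp [PiLp.inner_apply, RCLike.inner_apply, conj_trivial, mul_comm]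

lemma repr_toEuclideanLin {A : Matrix (Fin n) (Fin n) ℝ} (hA : A.IsHermitian)
    (x : EuclideanSpace ℝ (Fin n)) (j : Fin n) :
    hA.eigenvectorBasis.repr (Matrix.toEuclideanLin A x) j
      = hA.eigenvalues j * hA.eigenvectorBasis.repr x j := by
  have hsym := (Matrix.isHermitian_iff_isSymmetric.mp hA)
  have hTu : Matrix.toEuclideanLin A (hA.eigenvectorBasis j)
      = hA.eigenvalues j • hA.eigenvectorBasis j := by
    apply PiLp.ext
    intro i
    have := congrFun (hA.mulVec_eigenvectorBasis j) i
    simpa [Matrix.toEuclideanLin_apply] using this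
  rw [OrthonormalBasis.repr_apply_apply, OrthonormalBasis.repr_apply_apply, ← hsym, hTu,
    inner_smul_left]
  simp

lemma quadform {A : Matrix (Fin n) (Fin n) ℝ} (hA : A.IsHermitian)
    (x : EuclideanSpace ℝ (Fin n)) :
    ⟪x, Matrix.toEuclideanLin A x⟫
      = ∑ j, hA.eigenvalues j * (hA.eigenvectorBasis.repr x j)^2 := by
  rw [← hA.eigenvectorBasis.repr.inner_map_map x (Matrix.toEuclideanLin A x), euc_inner_eq]
  apply Finset.sum_congr rfl
  intro j _
  rw [repr_toEuclideanLin hA x j]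
  ring

lemma normsq_eq (b : OrthonormalBasis (Fin n) ℝ (EuclideanSpace ℝ (Fin n)))
    (x : EuclideanSpace ℝ (Fin n)) : ‖x‖^2 = ∑ j, (b.repr x j)^2 := by
  rw [← real_inner_self_eq_norm_sq, ← b.repr.inner_map_map x x, euc_inner_eq]
  apply Finset.sum_congr rfl
  intro j _
  ring

lemma repr_zero_of_span (b : OrthonormalBasis (Fin n) ℝ (EuclideanSpace ℝ (Fin n)))
    {m : ℕ} (e : Fin m → Fin n) {x : EuclideanSpace ℝ (Fin n)}
    (hx : x ∈ Submodule.span ℝ (Set.range (fun k => b (e k)))) {j : Fin n}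
    (hj : ∀ k, j ≠ e k) : b.repr x j = 0 := by
  rw [OrthonormalBasis.repr_apply_apply]
  induction hx using Submodule.span_induction with
  | mem y hy =>
    obtain ⟨k, rfl⟩ := hy
    exact b.orthonormal.2 (hj k)
  | zero => simp
  | add y z hy hz ihy ihz => rw [inner_add_right, ihy, ihz, add_zero]
  | smul a y hy ihy => rw [inner_smul_right, ihy, mul_zero]

lemma weyl_aux (A P M : Matrix (Fin n) (Fin n) ℝ) (hA : A.IsHermitian) (hM : M.IsHermitian)
    (hMeq : M = A + P) (σ τ : Equiv.Perm (Fin n))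
    (hσ : Monotone (hA.eigenvalues ∘ σ)) (hτ : Monotone (hM.eigenvalues ∘ τ))
    (c : ℝ) (hc : ∀ x : EuclideanSpace ℝ (Fin n), ⟪x, Matrix.toEuclideanLin P x⟫ ≤ c * ‖x‖^2)
    (i : Fin n) : hM.eigenvalues (τ i) ≤ hA.eigenvalues (σ i) + c := by
  have hin : (i : ℕ) + 1 ≤ n := i.2
  set uB := hA.eigenvectorBasis with huB
  set vB := hM.eigenvectorBasis with hvB
  set e1 : Fin ((i : ℕ) + 1) → Fin n := fun k => σ (Fin.castLE hin k) with he1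
  set e2 : Fin (n - (i : ℕ)) → Fin n := fun k => τ ⟨(i : ℕ) + (k : ℕ), by omega⟩ with he2
  have he1inj : Function.Injective e1 := by
    intro a b hab
    have := σ.injective hab
    exact Fin.castLE_injective hin this
  have he2inj : Function.Injective e2 := by
    intro a b hab
    have := τ.injective hab
    have : (i : ℕ) + (a : ℕ) = (i : ℕ) + (b : ℕ) := congrArg Fin.val this
    omega
  set U := Submodule.span ℝ (Set.range (fun k => uB (e1 k))) with hU
  set V := Submodule.span ℝ (Set.range (fun k => vB (e2 k))) with hV
  have hrankU : finrank ℝ U = (i : ℕ) + 1 := by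
    have h := finrank_span_eq_card ((uB.orthonormal.comp e1 he1inj).linearIndependent)
    simp only [Function.comp_def] at h
    rw [hU, h]
    simp
  have hrankV : finrank ℝ V = n - (i : ℕ) := by
    have h := finrank_span_eq_card ((vB.orthonormal.comp e2 he2inj).linearIndependent)
    simp only [Function.comp_def] at h
    rw [hV, h]
    simp
  have hne : U ⊓ V ≠ ⊥ := by
    intro hbot
    have h1 := Submodule.finrank_sup_add_finrank_inf_eq U V
    have h2 : finrank ℝ (U ⊓ V : Submodule ℝ (EuclideanSpace ℝ (Fin n))) = 0 := by
      rw [hbot]; simp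
    have h3 : finrank ℝ (U ⊔ V : Submodule ℝ (EuclideanSpace ℝ (Fin n))) ≤ n := by
      have := Submodule.finrank_le (U ⊔ V)
      simpa [finrank_euclideanSpace_fin] using this
    omega
  obtain ⟨x, hxUV, hx0⟩ := Submodule.exists_mem_ne_zero_of_ne_bot hne
  have hxU : x ∈ U := hxUV.1
  have hxV : x ∈ V := hxUV.2
  -- bound on A
  have hA_bd : ⟪x, Matrix.toEuclideanLin A x⟫ ≤ hA.eigenvalues (σ i) * ‖x‖^2 := by
    rw [quadform hA x, normsq_eq uB x, Finset.mul_sum]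
    apply Finset.sum_le_sum
    intro j _
    by_cases hr : uB.repr x j = 0
    · rw [hr]; simp
    · have hjmem : ∃ k, j = e1 k := by
        by_contra hcon
        push_neg at hcon
        exact hr (repr_zero_of_span uB e1 hxU hcon)
      obtain ⟨k, rfl⟩ := hjmem
      have : hA.eigenvalues (e1 k) ≤ hA.eigenvalues (σ i) := by
        have : Fin.castLE hin k ≤ i := by
          have := k.2
          exact Fin.le_def.mpr (by simpa using Nat.lt_succ_iff.mp k.2)
        exact hσ this
      exact mul_le_mul_of_nonneg_right this (sq_nonneg _)
  -- bound on M
  have hM_bd : hM.eigenvalues (τ i) * ‖x‖^2 ≤ ⟪x, Matrix.toEuclideanLin M x⟫ := by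
    rw [quadform hM x, normsq_eq vB x, Finset.mul_sum]
    apply Finset.sum_le_sum
    intro j _
    by_cases hr : vB.repr x j = 0
    · rw [hr]; simp
    · have hjmem : ∃ k, j = e2 k := by
        by_contra hcon
        push_neg at hcon
        exact hr (repr_zero_of_span vB e2 hxV hcon)
      obtain ⟨k, rfl⟩ := hjmem
      have : hM.eigenvalues (τ i) ≤ hM.eigenvalues (e2 k) := by
        have : i ≤ (⟨(i : ℕ) + (k : ℕ), by omega⟩ : Fin n) := by
          exact Fin.le_def.mpr (by simp)
        exact hτ this
      exact mul_le_mul_of_nonneg_right this (sq_nonneg _)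
  have hsplit : Matrix.toEuclideanLin M x
      = Matrix.toEuclideanLin A x + Matrix.toEuclideanLin P x := by
    rw [hMeq, map_add]; rfl
  have hnorm : (0:ℝ) < ‖x‖^2 := pow_pos (norm_pos_iff.mpr hx0) 2
  have hcomb : hM.eigenvalues (τ i) * ‖x‖^2 ≤ (hA.eigenvalues (σ i) + c) * ‖x‖^2 := by
    calc hM.eigenvalues (τ i) * ‖x‖^2 ≤ ⟪x, Matrix.toEuclideanLin M x⟫ := hM_bd
      _ = ⟪x, Matrix.toEuclideanLin A x⟫ + ⟪x, Matrix.toEuclideanLin P x⟫ := by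
          rw [hsplit, inner_add_right]
      _ ≤ hA.eigenvalues (σ i) * ‖x‖^2 + c * ‖x‖^2 := add_le_add hA_bd (hc x)
      _ = (hA.eigenvalues (σ i) + c) * ‖x‖^2 := by ring
  exact le_of_mul_le_mul_right hcomb hnorm

lemma rayleigh_abs {P : Matrix (Fin n) (Fin n) ℝ} (hP : P.IsHermitian) (c : ℝ)
    (hc : ∀ j, |hP.eigenvalues j| ≤ c) (x : EuclideanSpace ℝ (Fin n)) :
    |⟪x, Matrix.toEuclideanLin P x⟫| ≤ c * ‖x‖^2 := by
  rw [quadform hP x, normsq_eq hP.eigenvectorBasis x, Finset.mul_sum]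
  calc |∑ j, hP.eigenvalues j * (hP.eigenvectorBasis.repr x j)^2|
      ≤ ∑ j, |hP.eigenvalues j * (hP.eigenvectorBasis.repr x j)^2| :=
        Finset.abs_sum_le_sum_abs _ _
    _ ≤ ∑ j, c * (hP.eigenvectorBasis.repr x j)^2 := by
        apply Finset.sum_le_sum
        intro j _
        rw [abs_mul, abs_sq]
        exact mul_le_mul_of_nonneg_right (hc j) (sq_nonneg _)

/-- Weyl's perturbation inequality: if `A` and `P` are real symmetric `n×n` matrices and
`M = A + P`, then the `i`-th smallest eigenvalue `μ i` of `M` and the `i`-th smallest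
eigenvalue `λ i` of `A` satisfy `|μ i - λ i| ≤ c` for any bound `c` on the absolute values
of the eigenvalues of `P` (in particular for the spectral norm of `P`).
Eigenvalue sequences are encoded as monotone enumerations (with multiplicity) of the roots
of the characteristic polynomial. -/
theorem weyl_perturbation (n : ℕ) (A P : Matrix (Fin n) (Fin n) ℝ)
    (hA : A.IsSymm) (hP : P.IsSymm)
    (lam mu : Fin n → ℝ) (hlam_mono : Monotone lam) (hmu_mono : Monotone mu)
    (hlam : A.charpoly.roots = ↑(List.ofFn lam))
    (hmu : (A + P).charpoly.roots = ↑(List.ofFn mu))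
    (c : ℝ) (hc : ∀ x ∈ P.charpoly.roots, |x| ≤ c) :
    ∀ i, |mu i - lam i| ≤ c := by
  intro i
  have hAh : A.IsHermitian := isSymm_isHermitian hA
  have hPh : P.IsHermitian := isSymm_isHermitian hP
  have hMh : (A + P).IsHermitian := hAh.add hPh
  -- eigenvalue multiset identifications
  have hA_roots := roots_charpoly_hermitian hAh
  have hM_roots := roots_charpoly_hermitian hMh
  have hP_ev : ∀ j, |hPh.eigenvalues j| ≤ c := by
    intro j
    apply hc
    rw [roots_charpoly_hermitian hPh]
    exact Multiset.mem_map.mpr ⟨j, Finset.mem_univ_val _, rfl⟩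
  have huniv : ∀ f : Fin n → ℝ, Finset.univ.val.map f = (List.ofFn f : Multiset ℝ) := by
    intro f
    rw [List.ofFn_eq_map]
    rfl
  have hlam' : (List.ofFn lam : Multiset ℝ) = (List.ofFn hAh.eigenvalues : Multiset ℝ) := by
    rw [← hlam, hA_roots, huniv]
  have hmu' : (List.ofFn mu : Multiset ℝ) = (List.ofFn hMh.eigenvalues : Multiset ℝ) := by
    rw [← hmu, hM_roots, huniv]
  obtain ⟨σ, hσ⟩ := exists_perm_comp hlam_mono hlam'
  obtain ⟨τ, hτ⟩ := exists_perm_comp hmu_mono hmu'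
  have hσm : Monotone (hAh.eigenvalues ∘ σ) := hσ ▸ hlam_mono
  have hτm : Monotone (hMh.eigenvalues ∘ τ) := hτ ▸ hmu_mono
  have h1 : hMh.eigenvalues (τ i) ≤ hAh.eigenvalues (σ i) + c := by
    apply weyl_aux A P (A + P) hAh hMh rfl σ τ hσm hτm c ?_ i
    intro x
    exact le_of_abs_le (rayleigh_abs hPh c hP_ev x)
  have h2 : hAh.eigenvalues (σ i) ≤ hMh.eigenvalues (τ i) + c := by
    apply weyl_aux (A + P) (-P) A hMh hAh (by rw [add_neg_cancel_right]) τ σ hτm hσm c ?_ i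
    intro x
    have : Matrix.toEuclideanLin (-P) x = -(Matrix.toEuclideanLin P x) := by
      rw [map_neg]; rfl
    rw [this, inner_neg_right]
    calc -⟪x, Matrix.toEuclideanLin P x⟫ ≤ |⟪x, Matrix.toEuclideanLin P x⟫| := neg_le_abs _
      _ ≤ c * ‖x‖^2 := rayleigh_abs hPh c hP_ev x
  have hlami : lam i = hAh.eigenvalues (σ i) := congrFun hσ i
  have hmui : mu i = hMh.eigenvalues (τ i) := congrFun hτ i
  rw [hlami, hmui, abs_sub_le_iff]
  constructor <;> linarith
end

section
/- Vertex deletion eigenvalue bound for weighted graphs: let L be the Laplacian of an undirected weighted graph G with eigenvalues λ₁ ≤ ... ≤ λ_n, let v be a vertex all of whose incident edge weights are at most δ, and let L^v be the Laplacian of the graph obtained by deleting v, with eigenvalues λ^v₁ ≤ ... ≤ λ^v_{n-1}. Then λ_i - δ ≤ λ^v_i for all 1 ≤ i ≤ n-1. -/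
open Matrix Polynomial in
lemma my_charpoly_conj {N : ℕ} (U B : Matrix (Fin N) (Fin N) ℝ)
    (hU : U * star U = 1) : (U * B * star U).charpoly = B.charpoly := by
  have hU' : star U * U = 1 := mul_eq_one_comm.mp hU
  let f : Matrix (Fin N) (Fin N) ℝ →+* Matrix (Fin N) (Fin N) ℝ[X] :=
    (Polynomial.C : ℝ →+* ℝ[X]).mapMatrix
  have h1 : f U * f (star U) = 1 := by rw [← _root_.map_mul, hU, _root_.map_one]
  have h2 : f (star U) * f U = 1 := by rw [← _root_.map_mul, hU', _root_.map_one]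
  unfold Matrix.charpoly
  have hscalar : (Matrix.scalar (Fin N) (X : ℝ[X]))
      = ((X : ℝ[X]) • (1 : Matrix (Fin N) (Fin N) ℝ[X])) := by
    rw [Matrix.smul_one_eq_diagonal]; rfl
  have : charmatrix (U * B * star U) = f U * charmatrix B * f (star U) := by
    unfold charmatrix
    rw [Matrix.mul_sub, Matrix.sub_mul, _root_.map_mul, _root_.map_mul]
    congr 1
    rw [hscalar, Matrix.mul_smul, Matrix.mul_one, Matrix.smul_mul, h1]
  rw [this, Matrix.det_mul, Matrix.det_mul, mul_comm, ← mul_assoc, ← Matrix.det_mul, h2,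
    Matrix.det_one, one_mul]

open Matrix Polynomial in
lemma my_charpoly_roots {N : ℕ} {A : Matrix (Fin N) (Fin N) ℝ} (hA : A.IsHermitian) :
    A.charpoly.roots = (Finset.univ.val.map hA.eigenvalues) := by
  have hspec := hA.spectral_theorem
  have hU : (hA.eigenvectorUnitary : Matrix (Fin N) (Fin N) ℝ)
      * star (hA.eigenvectorUnitary : Matrix (Fin N) (Fin N) ℝ) = 1 :=
    Unitary.mul_star_self_of_mem hA.eigenvectorUnitary.2
  have h1 : A.charpoly = (Matrix.diagonal (RCLike.ofReal ∘ hA.eigenvalues) :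
      Matrix (Fin N) (Fin N) ℝ).charpoly := by
    conv_lhs => rw [hspec]
    exact my_charpoly_conj _ _ hU
  have h2 : (Matrix.diagonal (RCLike.ofReal ∘ hA.eigenvalues) :
      Matrix (Fin N) (Fin N) ℝ).charpoly = ∏ i, (X - C (hA.eigenvalues i)) := by
    unfold Matrix.charpoly charmatrix
    have : (Matrix.scalar (Fin N) (X : ℝ[X]))
        - (C : ℝ →+* ℝ[X]).mapMatrix (Matrix.diagonal (RCLike.ofReal ∘ hA.eigenvalues))
        = Matrix.diagonal (fun i => X - C (hA.eigenvalues i)) := by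
      ext i j
      rcases eq_or_ne i j with h | h
      · subst h; simp [Matrix.scalar_apply]
      · simp [Matrix.scalar_apply, Matrix.diagonal_apply_ne _ h]
    rw [this, Matrix.det_diagonal]
  rw [h1, h2]
  have h3 : (∏ i, (X - C (hA.eigenvalues i)))
      = ((Finset.univ.val.map hA.eigenvalues).map (fun a => X - C a)).prod := by
    rw [Multiset.map_map]
    rfl
  rw [h3, Polynomial.roots_multiset_prod_X_sub_C]

open Matrix Polynomial in
lemma my_eigen {N : ℕ} {A : Matrix (Fin N) (Fin N) ℝ} (hA : A.IsHermitian)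
    (lam : Fin N → ℝ) (hmono : Monotone lam)
    (hroots : A.charpoly.roots = ↑(List.ofFn lam)) :
    ∃ w : Fin N → (Fin N → ℝ),
      (∀ k l, w k ⬝ᵥ w l = if k = l then 1 else 0) ∧
      (∀ a b, (∑ k, w k a * w k b) = if a = b then 1 else 0) ∧
      (∀ k, A *ᵥ w k = lam k • w k) := by
  classical
  set μ := hA.eigenvalues with hμ
  -- lam is a sorted enumeration of the eigenvalues
  have hperm : (List.ofFn lam).Perm (List.ofFn μ) := by
    rw [← Multiset.coe_eq_coe]
    rw [← hroots, my_charpoly_roots hA]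
    have : (Finset.univ.val : Multiset (Fin N)) = ↑(List.finRange N) := by
      rfl
    rw [this]
    simp [List.ofFn_eq_map, hμ]
  set σ := Tuple.sort μ with hσ
  have hlam_eq : lam = μ ∘ σ := by
    apply List.ofFn_injective
    apply List.Perm.eq_of_sortedLE hmono.sortedLE_ofFn (Tuple.monotone_sort μ).sortedLE_ofFn
      (hperm.trans (Equiv.Perm.ofFn_comp_perm σ μ).symm)
  set w : Fin N → (Fin N → ℝ) := fun k => ⇑(hA.eigenvectorBasis (σ k)) with hw
  have hdot : ∀ k l, w k ⬝ᵥ w l = if k = l then 1 else 0 := by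
    intro k l
    have h1 : (inner ℝ (hA.eigenvectorBasis (σ k)) (hA.eigenvectorBasis (σ l)) : ℝ)
        = if k = l then 1 else 0 := by
      rw [orthonormal_iff_ite.mp hA.eigenvectorBasis.orthonormal (σ k) (σ l)]
      simp [Equiv.apply_eq_iff_eq]
    rw [← h1, PiLp.inner_apply]
    simp [dotProduct, RCLike.inner_apply, starRingEnd_apply, hw, mul_comm]
  refine ⟨w, hdot, ?_, ?_⟩
  · -- completeness
    intro a b
    set Umat : Matrix (Fin N) (Fin N) ℝ := Matrix.of (fun k m => w k m) with hU
    have h1 : Umat * Umatᵀ = 1 := by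
      ext k l
      simpa [Matrix.mul_apply, Matrix.one_apply, dotProduct, hU] using hdot k l
    have h2 : Umatᵀ * Umat = 1 := mul_eq_one_comm.mp h1
    have := congrFun (congrFun h2 a) b
    simpa [Matrix.mul_apply, Matrix.one_apply, hU] using this
  · intro k
    have := hA.mulVec_eigenvectorBasis (σ k)
    rw [hlam_eq]
    exact this

open Matrix in
lemma my_dot_lincomb {N p : ℕ} (u : Fin p → (Fin N → ℝ))
    (hu : ∀ k l, u k ⬝ᵥ u l = if k = l then 1 else 0)
    (c d : Fin p → ℝ) :
    (fun a => ∑ j, c j * u j a) ⬝ᵥ (fun a => ∑ j, d j * u j a) = ∑ j, c j * d j := by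
  unfold dotProduct
  simp_rw [Finset.sum_mul_sum]
  rw [Finset.sum_comm]
  have : ∀ j : Fin p, ∑ k : Fin p, ∑ a : Fin N, (c j * u j a) * (d k * u k a)
      = c j * d j := by
    intro j
    have : ∀ k : Fin p, ∑ a : Fin N, (c j * u j a) * (d k * u k a)
        = c j * d k * (u j ⬝ᵥ u k) := by
      intro k
      rw [dotProduct, Finset.mul_sum]
      congr 1; ext a; ring
    simp_rw [this, hu]
    simp
  refine Finset.sum_congr rfl fun j _ => ?_
  rw [Finset.sum_comm]
  exact this j

open Matrix in
lemma my_mulVec_lincomb {N p : ℕ} (A : Matrix (Fin N) (Fin N) ℝ) (u : Fin p → Fin N → ℝ)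
    (μ : Fin p → ℝ) (hA : ∀ j, A *ᵥ u j = μ j • u j) (c : Fin p → ℝ) :
    A *ᵥ (fun b => ∑ j, c j * u j b) = fun a => ∑ j, (c j * μ j) * u j a := by
  ext a
  rw [Matrix.mulVec, dotProduct]
  simp_rw [Finset.mul_sum]
  rw [Finset.sum_comm]
  refine Finset.sum_congr rfl fun j _ => ?_
  have h1 : ∑ b : Fin N, A a b * (c j * u j b) = c j * ((A *ᵥ u j) a) := by
    rw [Matrix.mulVec, dotProduct, Finset.mul_sum]
    congr 1; ext b; ring
  rw [h1, hA j]
  simp [Pi.smul_apply]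
  ring

open Matrix

/-- Vertex deletion eigenvalue bound for weighted graphs: let `L` be the Laplacian of an
undirected weighted graph `G` on `n+1` vertices (with symmetric nonnegative weight matrix
`W`), with eigenvalues `λ₁ ≤ ... ≤ λ_{n+1}`.  Let `v` be a vertex all of whose incident
edge weights are at most `δ`, and let `Lv` be the Laplacian of the graph obtained by
deleting `v`, with eigenvalues `λᵛ₁ ≤ ... ≤ λᵛ_n`.  Then `λ_i - δ ≤ λᵛ_i` for all `i`. -/
theorem laplacian_vertex_deletion_eigenvalue_bound (n : ℕ)
    (W : Matrix (Fin (n + 1)) (Fin (n + 1)) ℝ) (hWsymm : W.IsSymm)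
    (hWnonneg : ∀ i j, 0 ≤ W i j)
    (L : Matrix (Fin (n + 1)) (Fin (n + 1)) ℝ)
    (hL : L = Matrix.diagonal (fun i => ∑ j, W i j) - W)
    (v : Fin (n + 1)) (δ : ℝ) (hδ : 0 ≤ δ) (hWv : ∀ j, W j v ≤ δ)
    (Wv : Matrix (Fin n) (Fin n) ℝ) (hWvdef : Wv = W.submatrix v.succAbove v.succAbove)
    (Lv : Matrix (Fin n) (Fin n) ℝ)
    (hLv : Lv = Matrix.diagonal (fun i => ∑ j, Wv i j) - Wv)
    (lam : Fin (n + 1) → ℝ) (lamv : Fin n → ℝ)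
    (hlam_mono : Monotone lam) (hlamv_mono : Monotone lamv)
    (hlam : L.charpoly.roots = ↑(List.ofFn lam))
    (hlamv : Lv.charpoly.roots = ↑(List.ofFn lamv)) :
    ∀ i : Fin n, lam i.castSucc - δ ≤ lamv i := by
  classical
  intro i
  set s : Fin n → Fin (n + 1) := v.succAbove with hs
  have hsinj : Function.Injective s := Fin.succAbove_right_injective
  have hWs : ∀ a b, W b a = W a b := fun a b => congrFun (congrFun hWsymm a) b
  have hLherm : L.IsHermitian := by
    rw [hL]
    refine Matrix.IsHermitian.sub (Matrix.isHermitian_diagonal _) ?_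
    ext a b
    simpa [Matrix.conjTranspose_apply] using hWs a b
  have hLvherm : Lv.IsHermitian := by
    rw [hLv]
    refine Matrix.IsHermitian.sub (Matrix.isHermitian_diagonal _) ?_
    ext a b
    simp only [Matrix.conjTranspose_apply, hWvdef, Matrix.submatrix_apply, star_trivial]
    exact hWs (s a) (s b)
  obtain ⟨w, hw_on, hw_c, hw_eig⟩ := my_eigen hLherm lam hlam_mono hlam
  obtain ⟨u, hu_on, -, hu_eig⟩ := my_eigen hLvherm lamv hlamv_mono hlamv
  have hi1 : (i : ℕ) + 1 ≤ n := i.isLt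
  set e1 : Fin ((i : ℕ) + 1) → Fin n := Fin.castLE hi1 with he1
  set e2 : Fin (i : ℕ) → Fin (n + 1) := Fin.castLE (by omega) with he2
  set uu : Fin ((i : ℕ) + 1) → Fin n → ℝ := fun j => u (e1 j) with huu
  have huu_on : ∀ k l, uu k ⬝ᵥ uu l = if k = l then 1 else 0 := by
    intro k l
    rw [huu]
    simp only []
    rw [hu_on (e1 k) (e1 l)]
    simp [he1, Fin.castLE_inj]
  -- the embedding of vectors
  set emb : (Fin n → ℝ) → (Fin (n + 1) → ℝ) := fun y m => ∑ a, if s a = m then y a else 0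
    with hemb
  have hemb_s : ∀ y a, emb y (s a) = y a := by
    intro y a
    rw [hemb]
    simp only []
    have h1 : ∀ b, (if s b = s a then y b else 0) = if b = a then y b else 0 := fun b =>
      if_congr ⟨fun h => hsinj h, fun h => by rw [h]⟩ rfl rfl
    simp_rw [h1]
    simp
  have hemb_v : ∀ y, emb y v = 0 := by
    intro y
    rw [hemb]
    simp only []
    exact Finset.sum_eq_zero fun a _ => if_neg (Fin.succAbove_ne v a)
  have hdot1 : ∀ (y : Fin n → ℝ) (z : Fin (n + 1) → ℝ),
      emb y ⬝ᵥ z = ∑ a, y a * z (s a) := by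
    intro y z
    rw [dotProduct, Fin.sum_univ_succAbove (fun m => emb y m * z m) v, hemb_v]
    simp only [zero_mul, zero_add]
    exact Finset.sum_congr rfl fun a _ => by rw [hemb_s]
  have hdot2 : ∀ (y : Fin n → ℝ) (z : Fin (n + 1) → ℝ),
      z ⬝ᵥ emb y = ∑ a, z (s a) * y a := by
    intro y z
    rw [dotProduct, Fin.sum_univ_succAbove (fun m => z m * emb y m) v, hemb_v]
    simp only [mul_zero, zero_add]
    exact Finset.sum_congr rfl fun a _ => by rw [hemb_s]
  -- find a nonzero kernel vector
  set M : Matrix (Fin (i : ℕ)) (Fin ((i : ℕ) + 1)) ℝ :=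
    Matrix.of (fun k j => emb (uu j) ⬝ᵥ w (e2 k)) with hM
  have hnotinj : ¬ Function.Injective M.mulVecLin := by
    intro hinj
    have h1 := LinearMap.finrank_le_finrank_of_injective hinj
    rw [Module.finrank_fin_fun, Module.finrank_fin_fun] at h1
    omega
  obtain ⟨c1, c2, hc12, hcne⟩ := Function.not_injective_iff.mp hnotinj
  set c : Fin ((i : ℕ) + 1) → ℝ := c1 - c2 with hc
  have hc0 : c ≠ 0 := sub_ne_zero_of_ne hcne
  have hMc : M *ᵥ c = 0 := by
    have : M.mulVecLin c = 0 := by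
      rw [hc, map_sub, hc12, sub_self]
    simpa using this
  set x' : Fin n → ℝ := fun a => ∑ j, c j * uu j a with hx'
  set x : Fin (n + 1) → ℝ := emb x' with hx
  -- orthogonality to the low eigenvectors of L
  have hxw : ∀ k : Fin (i : ℕ), x ⬝ᵥ w (e2 k) = 0 := by
    intro k
    have h1 : x ⬝ᵥ w (e2 k) = ∑ a, x' a * w (e2 k) (s a) := hdot1 _ _
    have h2 : ∑ a, x' a * w (e2 k) (s a) = ∑ j, (∑ a, uu j a * w (e2 k) (s a)) * c j := by
      rw [hx']
      simp only []
      simp_rw [Finset.sum_mul]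
      rw [Finset.sum_comm]
      refine Finset.sum_congr rfl fun j _ => ?_
      exact Finset.sum_congr rfl fun a _ => by ring
    have h3 : ∑ j, (∑ a, uu j a * w (e2 k) (s a)) * c j = (M *ᵥ c) k := by
      rw [Matrix.mulVec, dotProduct]
      refine Finset.sum_congr rfl fun j _ => ?_
      congr 1
      rw [hM]
      exact (hdot1 (uu j) (w (e2 k))).symm
    rw [h1, h2, h3, hMc]
    rfl
  -- norms
  have hx'x' : x' ⬝ᵥ x' = ∑ j, c j * c j := by
    rw [hx']
    exact my_dot_lincomb uu huu_on c c
  have hSpos : 0 < x' ⬝ᵥ x' := by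
    rw [hx'x']
    obtain ⟨j0, hj0⟩ := Function.ne_iff.mp hc0
    refine Finset.sum_pos' (fun j _ => mul_self_nonneg _) ⟨j0, Finset.mem_univ _, ?_⟩
    have hne : c j0 ≠ 0 := by simpa using hj0
    exact mul_self_pos.mpr hne
  have hxx : x ⬝ᵥ x = x' ⬝ᵥ x' := by
    rw [hx, hdot1]
    exact Finset.sum_congr rfl fun a _ => by rw [hemb_s]
  -- upper bound part
  have hQ1 : x ⬝ᵥ (L *ᵥ x) = x' ⬝ᵥ ((L.submatrix s s) *ᵥ x') := by
    rw [hx, hdot1]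
    rw [dotProduct]
    refine Finset.sum_congr rfl fun a _ => ?_
    congr 1
    have h1 : (L *ᵥ emb x') (s a) = (fun m => L (s a) m) ⬝ᵥ emb x' := rfl
    rw [h1, hdot2]
    rw [Matrix.mulVec, dotProduct]
    exact Finset.sum_congr rfl fun b _ => rfl
  have hQ2 : L.submatrix s s = Lv + Matrix.diagonal (fun a => W (s a) v) := by
    ext a b
    rw [hL, hLv]
    rcases eq_or_ne a b with rfl | hab
    · simp only [Matrix.submatrix_apply, Matrix.sub_apply, Matrix.add_apply,
        Matrix.diagonal_apply_eq, hWvdef]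
      have h1 : ∑ m, W (s a) m = W (s a) v + ∑ k, W (s a) (s k) :=
        Fin.sum_univ_succAbove (fun m => W (s a) m) v
      rw [h1]
      ring
    · have hsab : s a ≠ s b := fun h => hab (hsinj h)
      simp only [Matrix.submatrix_apply, Matrix.sub_apply, Matrix.add_apply,
        Matrix.diagonal_apply_ne _ hab, Matrix.diagonal_apply_ne _ hsab, hWvdef]
      ring
  have hQ3 : x' ⬝ᵥ (Lv *ᵥ x') ≤ lamv i * (x' ⬝ᵥ x') := by
    have h1 : Lv *ᵥ x' = fun a => ∑ j, (c j * lamv (e1 j)) * uu j a := by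
      rw [hx']
      exact my_mulVec_lincomb Lv uu (fun j => lamv (e1 j)) (fun j => hu_eig (e1 j)) c
    have h2 : x' ⬝ᵥ (Lv *ᵥ x') = ∑ j, c j * (c j * lamv (e1 j)) := by
      rw [h1, hx']
      exact my_dot_lincomb uu huu_on c _
    rw [h2, hx'x', Finset.mul_sum]
    refine Finset.sum_le_sum fun j _ => ?_
    have h3 : lamv (e1 j) ≤ lamv i := by
      apply hlamv_mono
      rw [Fin.le_def]
      simp only [he1, Fin.coe_castLE]
      omega
    nlinarith [mul_self_nonneg (c j)]
  have hQ4 : x' ⬝ᵥ (Matrix.diagonal (fun a => W (s a) v) *ᵥ x') ≤ δ * (x' ⬝ᵥ x') := by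
    have h1 : x' ⬝ᵥ (Matrix.diagonal (fun a => W (s a) v) *ᵥ x')
        = ∑ a, W (s a) v * (x' a * x' a) := by
      rw [dotProduct]
      exact Finset.sum_congr rfl fun a _ => by rw [Matrix.mulVec_diagonal]; ring
    have h2 : δ * (x' ⬝ᵥ x') = ∑ a, δ * (x' a * x' a) := by
      rw [dotProduct, Finset.mul_sum]
    rw [h1, h2]
    exact Finset.sum_le_sum fun a _ =>
      mul_le_mul_of_nonneg_right (hWv (s a)) (mul_self_nonneg _)
  -- lower bound via expansion in the eigenbasis of L
  set d : Fin (n + 1) → ℝ := fun k => x ⬝ᵥ w k with hd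
  have hxrep : x = fun b => ∑ k, d k * w k b := by
    ext b
    have h1 : x b = ∑ a, x a * (∑ k, w k a * w k b) := by
      simp_rw [hw_c]
      simp
    rw [h1]
    simp_rw [Finset.mul_sum]
    rw [Finset.sum_comm]
    refine Finset.sum_congr rfl fun k _ => ?_
    rw [hd]
    simp only [dotProduct, Finset.sum_mul]
    exact Finset.sum_congr rfl fun a _ => by ring
  have hxx2 : x ⬝ᵥ x = ∑ k, d k * d k := by
    conv_lhs => rw [hxrep]
    exact my_dot_lincomb w hw_on d d
  have hxLx : x ⬝ᵥ (L *ᵥ x) = ∑ k, d k * (d k * lam k) := by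
    have h1 : L *ᵥ x = fun a => ∑ k, (d k * lam k) * w k a := by
      conv_lhs => rw [hxrep]
      exact my_mulVec_lincomb L w lam hw_eig d
    rw [h1]
    conv_lhs => rw [hxrep]
    exact my_dot_lincomb w hw_on d _
  have hlow : lam i.castSucc * (x ⬝ᵥ x) ≤ x ⬝ᵥ (L *ᵥ x) := by
    rw [hxx2, hxLx, Finset.mul_sum]
    refine Finset.sum_le_sum fun k _ => ?_
    rcases lt_or_ge (k : ℕ) (i : ℕ) with hk | hk
    · have hke : k = e2 ⟨(k : ℕ), hk⟩ := by
        rw [he2]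
        ext
        simp
      have hdk : d k = 0 := by
        rw [hd]
        simp only []
        rw [hke]
        exact hxw _
      rw [hdk]
      simp
    · have hlk : lam i.castSucc ≤ lam k := by
        apply hlam_mono
        rw [Fin.le_def]
        simpa using hk
      nlinarith [mul_self_nonneg (d k)]
  -- combine everything
  have hup : x ⬝ᵥ (L *ᵥ x) ≤ (lamv i + δ) * (x' ⬝ᵥ x') := by
    rw [hQ1, hQ2, Matrix.add_mulVec, dotProduct_add]
    have := add_le_add hQ3 hQ4
    linarith
  have hfinal : lam i.castSucc * (x' ⬝ᵥ x') ≤ (lamv i + δ) * (x' ⬝ᵥ x') := by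
    calc lam i.castSucc * (x' ⬝ᵥ x') = lam i.castSucc * (x ⬝ᵥ x) := by rw [hxx]
      _ ≤ x ⬝ᵥ (L *ᵥ x) := hlow
      _ ≤ (lamv i + δ) * (x' ⬝ᵥ x') := hup
  have := le_of_mul_le_mul_right hfinal hSpos
  linarith
end

section
/- Local sensitivity bound for closeness centrality: let G = (V,E,W) and G' = (V,E,W') be θ-edge-neighbouring connected weighted graphs on n vertices, with w = Σ_{e∈E} W(e) > θ. Then Σ_{u∈V} |1/S_G(u) - 1/S_{G'}(u)| ≤ n(n-1)θ / (w(w - θ)), where S_G(u) = Σ_{v∈V} d_G(u,v), provided S_G(u) ≥ w and S_{G'}(u) ≥ w - θ for all u. -/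
/-- The cost of a walk (list of vertices) under a weight function `W`. -/
def walkCost {V : Type*} (W : V → V → ℝ) : List V → ℝ
  | a :: b :: l => W a b + walkCost W (b :: l)
  | _ => 0

/-- `p` is a (simple) path from `u` to `v` in the graph with edge relation `E`. -/
def IsPathIn {V : Type*} (E : V → V → Prop) (u v : V) (p : List V) : Prop :=
  p.Chain' E ∧ p.head? = some u ∧ p.getLast? = some v ∧ p.Nodup

/-- The weighted shortest-path distance between `u` and `v`. -/
noncomputable def spDist {V : Type*} (E : V → V → Prop) (W : V → V → ℝ) (u v : V) : ℝ :=
  sInf {c | ∃ p : List V, IsPathIn E u v p ∧ walkCost W p = c}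

lemma walkCost_nonneg {V : Type*} (E : V → V → Prop) (W : V → V → ℝ)
    (hWpos : ∀ x y, E x y → 0 < W x y) :
    ∀ p : List V, p.Chain' E → 0 ≤ walkCost W p
  | [], _ => le_refl 0
  | [_], _ => le_refl 0
  | x :: y :: l, h => by
      replace h := List.isChain_cons_cons.mp h
      have h1 := (hWpos x y h.1).le
      have h2 := walkCost_nonneg E W hWpos (y :: l) h.2
      show 0 ≤ W x y + walkCost W (y :: l)
      linarith

lemma walkCost_eq_of_not_mem {V : Type*} (W W' : V → V → ℝ) (a b : V)
    (hagree : ∀ x y, ¬((x = a ∧ y = b) ∨ (x = b ∧ y = a)) → W x y = W' x y) :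
    ∀ p : List V, (a ∉ p ∨ b ∉ p) → walkCost W p = walkCost W' p
  | [], _ => rfl
  | [_], _ => rfl
  | x :: y :: l, h => by
      have hxy : W x y = W' x y := by
        apply hagree
        rintro (⟨rfl, rfl⟩ | ⟨rfl, rfl⟩) <;> simp at h
      have htail : walkCost W (y :: l) = walkCost W' (y :: l) := by
        apply walkCost_eq_of_not_mem W W' a b hagree
        rcases h with h | h
        · exact Or.inl fun hm => h (List.mem_cons_of_mem _ hm)
        · exact Or.inr fun hm => h (List.mem_cons_of_mem _ hm)
      show W x y + walkCost W (y :: l) = W' x y + walkCost W' (y :: l)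
      rw [hxy, htail]

lemma walkCost_diff_le {V : Type*} (W W' : V → V → ℝ) (θ : ℝ) (hθ : 0 < θ) (a b : V)
    (hWsymm : ∀ x y, W x y = W y x) (hW'symm : ∀ x y, W' x y = W' y x)
    (hagree : ∀ x y, ¬((x = a ∧ y = b) ∨ (x = b ∧ y = a)) → W x y = W' x y)
    (hdiff : |W a b - W' a b| ≤ θ) :
    ∀ p : List V, p.Nodup → |walkCost W p - walkCost W' p| ≤ θ
  | [], _ => by simp [walkCost]; exact hθ.le
  | [_], _ => by simp [walkCost]; exact hθ.le
  | x :: y :: l, h => by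
      rw [List.nodup_cons] at h
      by_cases hs : (x = a ∧ y = b) ∨ (x = b ∧ y = a)
      · have hx : x ∉ y :: l := h.1
        have htail : walkCost W (y :: l) = walkCost W' (y :: l) := by
          apply walkCost_eq_of_not_mem W W' a b hagree
          rcases hs with ⟨rfl, _⟩ | ⟨rfl, _⟩
          · exact Or.inl hx
          · exact Or.inr hx
        show |W x y + walkCost W (y :: l) - (W' x y + walkCost W' (y :: l))| ≤ θ
        rw [htail]
        have heq : W x y + walkCost W' (y :: l) - (W' x y + walkCost W' (y :: l))
            = W x y - W' x y := by ring
        rw [heq]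
        rcases hs with ⟨rfl, rfl⟩ | ⟨rfl, rfl⟩
        · exact hdiff
        · rw [hWsymm, hW'symm]; exact hdiff
      · have hxy : W x y = W' x y := hagree x y hs
        have htail := walkCost_diff_le W W' θ hθ a b hWsymm hW'symm hagree hdiff (y :: l) h.2
        show |W x y + walkCost W (y :: l) - (W' x y + walkCost W' (y :: l))| ≤ θ
        rw [hxy]
        have heq : W' x y + walkCost W (y :: l) - (W' x y + walkCost W' (y :: l))
            = walkCost W (y :: l) - walkCost W' (y :: l) := by ring
        rw [heq]; exact htail

lemma spDist_set_nonempty {V : Type*} (E : V → V → Prop) (W : V → V → ℝ)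
    (hconn : ∀ u v : V, ∃ p : List V, IsPathIn E u v p) (u v : V) :
    {c | ∃ p : List V, IsPathIn E u v p ∧ walkCost W p = c}.Nonempty := by
  obtain ⟨p, hp⟩ := hconn u v
  exact ⟨walkCost W p, p, hp, rfl⟩

lemma spDist_set_bddBelow {V : Type*} (E : V → V → Prop) (W : V → V → ℝ)
    (hWpos : ∀ x y, E x y → 0 < W x y) (u v : V) :
    BddBelow {c | ∃ p : List V, IsPathIn E u v p ∧ walkCost W p = c} := by
  refine ⟨0, fun c hc => ?_⟩
  obtain ⟨p, hp, rfl⟩ := hc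
  exact walkCost_nonneg E W hWpos p hp.1

lemma spDist_le_spDist_add {V : Type*} (E : V → V → Prop) (W W' : V → V → ℝ) (θ : ℝ)
    (hWpos : ∀ x y, E x y → 0 < W x y)
    (hcost : ∀ p : List V, p.Nodup → |walkCost W p - walkCost W' p| ≤ θ)
    (hconn : ∀ u v : V, ∃ p : List V, IsPathIn E u v p) (u v : V) :
    spDist E W u v ≤ spDist E W' u v + θ := by
  have h : spDist E W u v - θ ≤ spDist E W' u v := by
    apply le_csInf (spDist_set_nonempty E W' hconn u v)
    rintro c ⟨p, hp, rfl⟩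
    have h1 : spDist E W u v ≤ walkCost W p :=
      csInf_le (spDist_set_bddBelow E W hWpos u v) ⟨p, hp, rfl⟩
    have h2 := (abs_le.mp (hcost p hp.2.2.2)).2
    linarith
  linarith

lemma spDist_self {V : Type*} (E : V → V → Prop) (W : V → V → ℝ) (u : V) :
    spDist E W u u = 0 := by
  have hset : {c | ∃ p : List V, IsPathIn E u u p ∧ walkCost W p = c} = {0} := by
    ext c
    simp only [Set.mem_setOf_eq, Set.mem_singleton_iff]
    constructor
    · rintro ⟨p, ⟨hch, hhd, hlast, hnd⟩, rfl⟩
      match p with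
      | [] => simp at hhd
      | [x] =>
        rfl
      | x :: y :: l =>
        exfalso
        have hx : x = u := by simpa using hhd
        have hlast2 : (y :: l).getLast? = some u := by
          rw [List.getLast?_cons_cons] at hlast; exact hlast
        have hmem : u ∈ y :: l := List.mem_of_mem_getLast? hlast2
        rw [List.nodup_cons] at hnd
        exact hnd.1 (hx ▸ hmem)
    · rintro rfl
      exact ⟨[u], ⟨List.isChain_singleton u, by simp, by simp, by simp⟩, rfl⟩
  rw [spDist, hset, csInf_singleton]

/-- Local sensitivity bound for closeness centrality: if `G = (V,E,W)` and `G' = (V,E,W')`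
are `θ`-edge-neighbouring connected weighted graphs on `n` vertices, `w` is the total edge
weight of `G` with `w > θ`, and `S_G(u) = Σ_v d_G(u,v)` satisfies `S_G(u) ≥ w` and
`S_{G'}(u) ≥ w - θ` for all `u`, then
`Σ_u |1/S_G(u) - 1/S_{G'}(u)| ≤ n(n-1)θ / (w(w-θ))`. -/
theorem closeness_local_sensitivity_bound {V : Type*} [Fintype V]
    (E : V → V → Prop) (W W' : V → V → ℝ) (θ : ℝ) (hθ : 0 < θ)
    (hEsymm : ∀ x y, E x y → E y x)
    (hWsymm : ∀ x y, W x y = W y x) (hW'symm : ∀ x y, W' x y = W' y x)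
    (hWpos : ∀ x y, E x y → 0 < W x y) (hW'pos : ∀ x y, E x y → 0 < W' x y)
    (a b : V) (hab : E a b)
    (hagree : ∀ x y, ¬((x = a ∧ y = b) ∨ (x = b ∧ y = a)) → W x y = W' x y)
    (hne : W a b ≠ W' a b) (hdiff : |W a b - W' a b| ≤ θ)
    (hconn : ∀ u v : V, ∃ p : List V, IsPathIn E u v p)
    (w : ℝ) (hw : w = (∑ x, ∑ y, W x y) / 2) (hwθ : θ < w)
    (hSG : ∀ u : V, w ≤ ∑ v, spDist E W u v)
    (hSG' : ∀ u : V, w - θ ≤ ∑ v, spDist E W' u v) :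
    ∑ u : V, |1 / (∑ v, spDist E W u v) - 1 / (∑ v, spDist E W' u v)|
      ≤ (Fintype.card V) * (Fintype.card V - 1) * θ / (w * (w - θ)) := by
  classical
  set n := Fintype.card V with hn
  have hcost := walkCost_diff_le W W' θ hθ a b hWsymm hW'symm hagree hdiff
  have hcost' : ∀ p : List V, p.Nodup → |walkCost W' p - walkCost W p| ≤ θ := by
    intro p hp; rw [abs_sub_comm]; exact hcost p hp
  -- per-pair distance bound
  have hd : ∀ u v : V, |spDist E W u v - spDist E W' u v| ≤ θ := by
    intro u v
    have h1 := spDist_le_spDist_add E W W' θ hWpos hcost hconn u v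
    have h2 := spDist_le_spDist_add E W' W θ hW'pos hcost' hconn u v
    rw [abs_le]; constructor <;> linarith
  -- V is nonempty
  have hV : Nonempty V := ⟨a⟩
  have hn1 : 1 ≤ n := Fintype.card_pos
  have hw0 : (0:ℝ) < w := lt_trans hθ hwθ
  have hwθ0 : (0:ℝ) < w - θ := by linarith
  -- per-vertex bound
  have key : ∀ u : V, |1 / (∑ v, spDist E W u v) - 1 / (∑ v, spDist E W' u v)|
      ≤ ((n:ℝ) - 1) * θ / (w * (w - θ)) := by
    intro u
    set S := ∑ v, spDist E W u v with hS
    set S' := ∑ v, spDist E W' u v with hS'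
    have hSw : w ≤ S := hSG u
    have hS'w : w - θ ≤ S' := hSG' u
    have hSpos : 0 < S := lt_of_lt_of_le hw0 hSw
    have hS'pos : 0 < S' := lt_of_lt_of_le hwθ0 hS'w
    -- |S - S'| ≤ (n-1)θ
    have hSS' : |S - S'| ≤ ((n:ℝ) - 1) * θ := by
      have h1 : S - S' = ∑ v, (spDist E W u v - spDist E W' u v) := by
        rw [Finset.sum_sub_distrib]
      rw [h1]
      calc |∑ v, (spDist E W u v - spDist E W' u v)|
          ≤ ∑ v, |spDist E W u v - spDist E W' u v| := Finset.abs_sum_le_sum_abs _ _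
        _ = ∑ v ∈ Finset.univ.erase u, |spDist E W u v - spDist E W' u v| := by
            rw [← Finset.add_sum_erase _ _ (Finset.mem_univ u)]
            rw [spDist_self, spDist_self]
            simp
        _ ≤ ∑ _v ∈ Finset.univ.erase u, θ := Finset.sum_le_sum fun v _ => hd u v
        _ = ((n:ℝ) - 1) * θ := by
            rw [Finset.sum_const, Finset.card_erase_of_mem (Finset.mem_univ u)]
            rw [Finset.card_univ, nsmul_eq_mul, Nat.cast_sub hn1]
            simp
    have heq : 1 / S - 1 / S' = (S' - S) / (S * S') := by
      field_simp
    rw [heq, abs_div, abs_of_pos (mul_pos hSpos hS'pos), abs_sub_comm]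
    have hnum : |S - S'| ≤ ((n:ℝ) - 1) * θ := hSS'
    have hden : w * (w - θ) ≤ S * S' :=
      mul_le_mul hSw hS'w hwθ0.le hSpos.le
    have hnum0 : (0:ℝ) ≤ ((n:ℝ) - 1) * θ := by
      have : (1:ℝ) ≤ (n:ℝ) := by exact_mod_cast hn1
      nlinarith
    exact div_le_div₀ hnum0 hnum (mul_pos hw0 hwθ0) hden
  calc ∑ u : V, |1 / (∑ v, spDist E W u v) - 1 / (∑ v, spDist E W' u v)|
      ≤ ∑ _u : V, ((n:ℝ) - 1) * θ / (w * (w - θ)) := Finset.sum_le_sum fun u _ => key u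
    _ = (n:ℝ) * (((n:ℝ) - 1) * θ / (w * (w - θ))) := by
        rw [Finset.sum_const, Finset.card_univ, nsmul_eq_mul]
    _ = (n:ℝ) * ((n:ℝ) - 1) * θ / (w * (w - θ)) := by ring
end

section
/- Davis–Kahan consequence for top eigenvectors: let A and A' = A + P be n×n real symmetric matrices with eigenvalues λ₁ ≤ ... ≤ λ_n of A, and suppose the spectral gap g = λ_n - λ_{n-1} > 0. Let v and v' be unit top eigenvectors of A and A' respectively, with ⟨v, v'⟩ ≥ 0. Then ‖v - v'‖₂ ≤ 2√2·‖P‖/g, where ‖P‖ is the spectral norm. -/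
open Polynomial Finset

namespace DKaux

lemma charpoly_conj_units {N : ℕ} (U M V : Matrix (Fin N) (Fin N) ℝ)
    (hUV : U * V = 1) : (U * M * V).charpoly = M.charpoly := by
  have hmap1 : (1 : Matrix (Fin N) (Fin N) ℝ).map (C : ℝ →+* ℝ[X]) = 1 :=
    Matrix.map_one _ (map_zero C) (map_one C)
  have hc : U.map (C : ℝ →+* ℝ[X]) * Matrix.scalar (Fin N) (X : ℝ[X])
      = Matrix.scalar (Fin N) (X : ℝ[X]) * U.map C :=
    ((Matrix.scalar_commute (X : ℝ[X]) (fun r' => Commute.all _ _) (U.map C)).eq).symm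
  have key : Matrix.charmatrix (U * M * V)
      = U.map (C : ℝ →+* ℝ[X]) * Matrix.charmatrix M * V.map C := by
    rw [Matrix.charmatrix, Matrix.charmatrix, Matrix.mul_sub, Matrix.sub_mul]
    congr 1
    · rw [hc, Matrix.mul_assoc, ← Matrix.map_mul, hUV, hmap1, Matrix.mul_one]
    · simp only [RingHom.mapMatrix_apply, Matrix.map_mul]
  have hUV' : U.map (C : ℝ →+* ℝ[X]) * V.map C = 1 := by
    rw [← Matrix.map_mul, hUV, hmap1]
  rw [Matrix.charpoly, Matrix.charpoly, key, Matrix.det_mul, Matrix.det_mul]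
  calc (U.map (C : ℝ →+* ℝ[X])).det * (Matrix.charmatrix M).det * (V.map C).det
      = (Matrix.charmatrix M).det * ((U.map (C : ℝ →+* ℝ[X])).det * (V.map C).det) := by ring
    _ = (Matrix.charmatrix M).det * (U.map (C : ℝ →+* ℝ[X]) * V.map C).det := by
        rw [Matrix.det_mul]
    _ = (Matrix.charmatrix M).det := by rw [hUV', Matrix.det_one, mul_one]

lemma roots_charpoly_diagonal {N : ℕ} (d : Fin N → ℝ) :
    (Matrix.diagonal d).charpoly.roots = Finset.univ.val.map d := by
  have h1 : Matrix.charmatrix (Matrix.diagonal d)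
      = Matrix.diagonal (fun i => (X : ℝ[X]) - C (d i)) := by
    ext i j
    by_cases h : i = j
    · subst h; simp
    · simp [Matrix.charmatrix_apply_ne _ _ _ h, Matrix.diagonal_apply_ne _ h]
  rw [Matrix.charpoly, h1, Matrix.det_diagonal]
  have h2 : ∏ i, ((X : ℝ[X]) - C (d i))
      = ((Finset.univ.val.map d).map (fun a => (X : ℝ[X]) - C a)).prod := by
    rw [Multiset.map_map]; rfl
  rw [h2, Polynomial.roots_multiset_prod_X_sub_C]

lemma roots_charpoly_hermitian {N : ℕ} (A : Matrix (Fin N) (Fin N) ℝ)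
    (hAH : A.IsHermitian) :
    A.charpoly.roots = Finset.univ.val.map hAH.eigenvalues := by
  have hUV : (hAH.eigenvectorUnitary : Matrix (Fin N) (Fin N) ℝ)
      * star (hAH.eigenvectorUnitary : Matrix (Fin N) (Fin N) ℝ) = 1 :=
    (Matrix.mem_unitaryGroup_iff).mp hAH.eigenvectorUnitary.2
  have hdiag : (Matrix.diagonal (RCLike.ofReal ∘ hAH.eigenvalues) : Matrix (Fin N) (Fin N) ℝ)
      = Matrix.diagonal hAH.eigenvalues := by
    congr 1
  have key : A.charpoly = (Matrix.diagonal hAH.eigenvalues).charpoly := by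
    conv_lhs => rw [hAH.spectral_theorem, hdiag]
    exact charpoly_conj_units _ _ _ hUV
  rw [key, roots_charpoly_diagonal]


lemma sum_mul_eq_sum_basis {N : ℕ} (B : OrthonormalBasis (Fin N) ℝ (EuclideanSpace ℝ (Fin N)))
    (x y : Fin N → ℝ) :
    ∑ k, x k * y k = ∑ i, (∑ k, x k * B i k) * (∑ k, B i k * y k) := by
  have h := B.sum_inner_mul_inner ((WithLp.equiv 2 (Fin N → ℝ)).symm x)
    ((WithLp.equiv 2 (Fin N → ℝ)).symm y)
  simp only [PiLp.inner_apply, RCLike.inner_apply, starRingEnd_apply, star_trivial,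
    WithLp.equiv_symm_apply, PiLp.toLp_apply] at h
  rw [Finset.sum_congr rfl fun k _ => mul_comm (x k) (y k), ← h]
  refine Finset.sum_congr rfl fun i _ => ?_
  congr 1 <;> exact Finset.sum_congr rfl fun k _ => mul_comm _ _

lemma sym_shift {N : ℕ} (M : Matrix (Fin N) (Fin N) ℝ) (hM : M.IsSymm) (x y : Fin N → ℝ) :
    ∑ k, (M.mulVec x) k * y k = ∑ k, x k * (M.mulVec y) k := by
  simp only [Matrix.mulVec, dotProduct, Finset.sum_mul, Finset.mul_sum]
  rw [Finset.sum_comm]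
  refine Finset.sum_congr rfl fun k _ => Finset.sum_congr rfl fun l _ => ?_
  rw [← hM.apply l k]
  ring

end DKaux

open DKaux Finset

set_option maxHeartbeats 2000000 in
/-- Davis–Kahan consequence for top eigenvectors: let `A` and `A' = A + P` be real
symmetric matrices (dimension `n + 2 ≥ 2`) with sorted eigenvalues `lam` of `A` and `mu`
of `A'`, and spectral gap `g = λ_top - λ_second > 0`.  Let `v` and `v'` be unit top
eigenvectors of `A` and `A'` with `⟨v, v'⟩ ≥ 0`, and let `p` bound the spectral norm of
`P`.  Then `‖v - v'‖₂ ≤ 2√2·p/g`. -/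
theorem davis_kahan_top_eigenvector (n : ℕ)
    (A P : Matrix (Fin (n + 2)) (Fin (n + 2)) ℝ) (hA : A.IsSymm) (hPsymm : P.IsSymm)
    (lam mu : Fin (n + 2) → ℝ) (hlam_mono : Monotone lam) (hmu_mono : Monotone mu)
    (hlam : A.charpoly.roots = ↑(List.ofFn lam))
    (hmu : (A + P).charpoly.roots = ↑(List.ofFn mu))
    (g : ℝ) (hg : g = lam (Fin.last (n + 1)) - lam ⟨n, by omega⟩) (hgpos : 0 < g)
    (p : ℝ)
    (hPnorm : ∀ x : Fin (n + 2) → ℝ,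
      Real.sqrt (∑ k, (P.mulVec x k) ^ 2) ≤ p * Real.sqrt (∑ k, (x k) ^ 2))
    (v v' : Fin (n + 2) → ℝ)
    (hv_unit : Real.sqrt (∑ k, (v k) ^ 2) = 1)
    (hv'_unit : Real.sqrt (∑ k, (v' k) ^ 2) = 1)
    (hv : A.mulVec v = lam (Fin.last (n + 1)) • v)
    (hv' : (A + P).mulVec v' = mu (Fin.last (n + 1)) • v')
    (hinner : 0 ≤ ∑ k, v k * v' k) :
    Real.sqrt (∑ k, (v k - v' k) ^ 2) ≤ 2 * Real.sqrt 2 * p / g := by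
  -- Hermitian structures
  have hAH : A.IsHermitian := by
    rw [Matrix.IsHermitian, Matrix.conjTranspose_eq_transpose_of_trivial]; exact hA
  have hAPsymm : (A + P).IsSymm := hA.add hPsymm
  have hAPH : (A + P).IsHermitian := by
    rw [Matrix.IsHermitian, Matrix.conjTranspose_eq_transpose_of_trivial]; exact hAPsymm
  -- basic facts
  have hv2 : ∑ k, (v k) ^ 2 = 1 := by
    have h0 : (0:ℝ) ≤ ∑ k, (v k) ^ 2 := Finset.sum_nonneg fun k _ => sq_nonneg _
    rw [← Real.sq_sqrt h0, hv_unit, one_pow]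
  have hv'2 : ∑ k, (v' k) ^ 2 = 1 := by
    have h0 : (0:ℝ) ≤ ∑ k, (v' k) ^ 2 := Finset.sum_nonneg fun k _ => sq_nonneg _
    rw [← Real.sq_sqrt h0, hv'_unit, one_pow]
  have hp0 : 0 ≤ p := by
    have h := hPnorm v
    rw [hv_unit, mul_one] at h
    exact le_trans (Real.sqrt_nonneg _) h
  have hPsq : ∀ x : Fin (n + 2) → ℝ, ∑ k, (P.mulVec x k) ^ 2 ≤ p ^ 2 * ∑ k, (x k) ^ 2 := by
    intro x
    have h := hPnorm x
    have ha : (0:ℝ) ≤ ∑ k, (P.mulVec x k) ^ 2 := Finset.sum_nonneg fun k _ => sq_nonneg _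
    have hb : (0:ℝ) ≤ ∑ k, (x k) ^ 2 := Finset.sum_nonneg fun k _ => sq_nonneg _
    nlinarith [Real.sq_sqrt ha, Real.sq_sqrt hb, Real.sqrt_nonneg (∑ k, (P.mulVec x k) ^ 2),
      Real.sqrt_nonneg (∑ k, (x k) ^ 2)]
  -- eigenvalue multiset identification
  have hrootsA : Multiset.map hAH.eigenvalues Finset.univ.val
      = Multiset.map lam Finset.univ.val := by
    calc Multiset.map hAH.eigenvalues Finset.univ.val = A.charpoly.roots :=
          (roots_charpoly_hermitian A hAH).symm
      _ = ↑(List.ofFn lam) := hlam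
      _ = Multiset.map lam Finset.univ.val := (Fin.univ_val_map lam).symm
  have hrootsP : Multiset.map hAPH.eigenvalues Finset.univ.val
      = Multiset.map mu Finset.univ.val := by
    calc Multiset.map hAPH.eigenvalues Finset.univ.val = (A + P).charpoly.roots :=
          (roots_charpoly_hermitian (A + P) hAPH).symm
      _ = ↑(List.ofFn mu) := hmu
      _ = Multiset.map mu Finset.univ.val := (Fin.univ_val_map mu).symm
  have hmemA : ∀ i, ∃ j, lam j = hAH.eigenvalues i := by
    intro i
    have h : hAH.eigenvalues i ∈ Multiset.map lam Finset.univ.val := by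
      rw [← hrootsA]
      exact Multiset.mem_map_of_mem _ (Finset.mem_univ i)
    obtain ⟨j, _, hj⟩ := Multiset.mem_map.mp h
    exact ⟨j, hj⟩
  have hmemP : ∀ i, ∃ j, mu j = hAPH.eigenvalues i := by
    intro i
    have h : hAPH.eigenvalues i ∈ Multiset.map mu Finset.univ.val := by
      rw [← hrootsP]
      exact Multiset.mem_map_of_mem _ (Finset.mem_univ i)
    obtain ⟨j, _, hj⟩ := Multiset.mem_map.mp h
    exact ⟨j, hj⟩
  have hlam_lt : ∀ j : Fin (n + 2), j ≠ Fin.last (n + 1) → lam j ≤ lam ⟨n, by omega⟩ := by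
    intro j hj
    apply hlam_mono
    have hjv : (j : ℕ) ≠ n + 1 := fun h => hj (Fin.ext h)
    have := j.isLt
    exact Fin.mk_le_mk.mpr (by omega) |>.trans_eq rfl
  have hl2lt : lam ⟨n, by omega⟩ < lam (Fin.last (n + 1)) := by
    rw [hg] at hgpos; linarith
  -- uniqueness of the top eigenvalue index
  have hcount : ∀ (f : Fin (n + 2) → ℝ) (b : ℝ),
      (Multiset.map f Finset.univ.val).count b
        = (Finset.univ.filter (fun a => b = f a)).card := by
    intro f b
    rw [Multiset.count_map]
    rfl
  have hfilterlam : Finset.univ.filter (fun j => lam (Fin.last (n + 1)) = lam j)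
      = {Fin.last (n + 1)} := by
    ext j
    simp only [Finset.mem_filter, Finset.mem_univ, true_and, Finset.mem_singleton]
    constructor
    · intro hj
      by_contra hne
      have h1 := hlam_lt j hne
      linarith [hl2lt]
    · rintro rfl; rfl
  have hcard1 : (Finset.univ.filter (fun i => lam (Fin.last (n + 1)) = hAH.eigenvalues i)).card
      = 1 := by
    rw [← hcount, hrootsA, hcount, hfilterlam, Finset.card_singleton]
  obtain ⟨i₀, hi₀⟩ := Finset.card_eq_one.mp hcard1
  have hi₀' : ∀ i, lam (Fin.last (n + 1)) = hAH.eigenvalues i ↔ i = i₀ := by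
    intro i
    have h := Finset.ext_iff.mp hi₀ i
    simpa using h
  -- Parseval framework
  have hParse : ∀ (B : OrthonormalBasis (Fin (n+2)) ℝ (EuclideanSpace ℝ (Fin (n+2))))
      (x y : Fin (n+2) → ℝ),
      ∑ k, x k * y k = ∑ i, (∑ k, x k * B i k) * (∑ k, y k * B i k) := by
    intro B x y
    rw [sum_mul_eq_sum_basis B x y]
    exact Finset.sum_congr rfl fun i _ =>
      congrArg _ (Finset.sum_congr rfl fun k _ => mul_comm _ _)
  have hBcoef : ∀ (x : Fin (n+2) → ℝ) (i : Fin (n+2)),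
      ∑ k, x k * (A.mulVec (hAH.eigenvectorBasis i)) k
        = hAH.eigenvalues i * ∑ k, x k * hAH.eigenvectorBasis i k := by
    intro x i
    have key : ∀ k, A.mulVec (hAH.eigenvectorBasis i) k
        = hAH.eigenvalues i * hAH.eigenvectorBasis i k := by
      intro k
      have h := congrFun (hAH.mulVec_eigenvectorBasis i) k
      simpa [Pi.smul_apply, smul_eq_mul] using h
    rw [Finset.mul_sum]
    exact Finset.sum_congr rfl fun k _ => by rw [key k]; ring
  have hB'coef : ∀ (x : Fin (n+2) → ℝ) (i : Fin (n+2)),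
      ∑ k, x k * ((A + P).mulVec (hAPH.eigenvectorBasis i)) k
        = hAPH.eigenvalues i * ∑ k, x k * hAPH.eigenvectorBasis i k := by
    intro x i
    have key : ∀ k, (A + P).mulVec (hAPH.eigenvectorBasis i) k
        = hAPH.eigenvalues i * hAPH.eigenvectorBasis i k := by
      intro k
      have h := congrFun (hAPH.mulVec_eigenvectorBasis i) k
      simpa [Pi.smul_apply, smul_eq_mul] using h
    rw [Finset.mul_sum]
    exact Finset.sum_congr rfl fun k _ => by rw [key k]; ring
  -- the coefficients of v vanish away from i₀
  have hb0 : ∀ i, i ≠ i₀ → (∑ k, v k * hAH.eigenvectorBasis i k) = 0 := by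
    intro i hi
    have h1 : ∑ k, (A.mulVec v) k * hAH.eigenvectorBasis i k
        = hAH.eigenvalues i * ∑ k, v k * hAH.eigenvectorBasis i k := by
      rw [sym_shift A hA]; exact hBcoef v i
    have h2 : ∑ k, (A.mulVec v) k * hAH.eigenvectorBasis i k
        = lam (Fin.last (n+1)) * ∑ k, v k * hAH.eigenvectorBasis i k := by
      rw [hv, Finset.mul_sum]
      exact Finset.sum_congr rfl fun k _ => by
        simp only [Pi.smul_apply, smul_eq_mul]; ring
    have hne : lam (Fin.last (n+1)) ≠ hAH.eigenvalues i := fun h => hi ((hi₀' i).mp h)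
    have h4 : (hAH.eigenvalues i - lam (Fin.last (n+1)))
        * (∑ k, v k * hAH.eigenvectorBasis i k) = 0 := by
      linear_combination h1.symm.trans h2
    rcases mul_eq_zero.mp h4 with h | h
    · exact absurd (by linarith [sub_eq_zero.mp h] : lam (Fin.last (n+1)) = hAH.eigenvalues i) hne
    · exact h
  -- Parseval identities
  have hbb : ∑ i, (∑ k, v k * hAH.eigenvectorBasis i k) * (∑ k, v k * hAH.eigenvectorBasis i k)
      = 1 := by
    rw [← hParse hAH.eigenvectorBasis v v]
    rw [← hv2]
    exact Finset.sum_congr rfl fun k _ => (pow_two (v k)).symm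
  have hcc : ∑ i, (∑ k, v' k * hAH.eigenvectorBasis i k) * (∑ k, v' k * hAH.eigenvectorBasis i k)
      = 1 := by
    rw [← hParse hAH.eigenvectorBasis v' v']
    rw [← hv'2]
    exact Finset.sum_congr rfl fun k _ => (pow_two (v' k)).symm
  have hsingle : ∀ (f : Fin (n+2) → ℝ),
      ∑ i, (∑ k, v k * hAH.eigenvectorBasis i k) * f i
        = (∑ k, v k * hAH.eigenvectorBasis i₀ k) * f i₀ :=
    fun f => Finset.sum_eq_single i₀ (fun i _ hi => by rw [hb0 i hi, zero_mul])
      (fun h => absurd (Finset.mem_univ i₀) h)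
  have hbi0 : (∑ k, v k * hAH.eigenvectorBasis i₀ k) * (∑ k, v k * hAH.eigenvectorBasis i₀ k)
      = 1 := by
    rw [← hsingle (fun i => ∑ k, v k * hAH.eigenvectorBasis i k)]
    exact hbb
  have hc_eq : ∑ k, v k * v' k
      = (∑ k, v k * hAH.eigenvectorBasis i₀ k) * (∑ k, v' k * hAH.eigenvectorBasis i₀ k) := by
    rw [hParse hAH.eigenvectorBasis v v']
    exact hsingle (fun i => ∑ k, v' k * hAH.eigenvectorBasis i k)
  -- c² = (cc i₀)², c ≤ 1
  have hc2 : (∑ k, v k * v' k) ^ 2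
      = (∑ k, v' k * hAH.eigenvectorBasis i₀ k) * (∑ k, v' k * hAH.eigenvectorBasis i₀ k) := by
    rw [hc_eq]
    nlinarith [hbi0]
  have hcci0_le : (∑ k, v' k * hAH.eigenvectorBasis i₀ k) * (∑ k, v' k * hAH.eigenvectorBasis i₀ k)
      ≤ 1 := by
    rw [← hcc]
    exact Finset.single_le_sum (f := fun i =>
      (∑ k, v' k * hAH.eigenvectorBasis i k) * (∑ k, v' k * hAH.eigenvectorBasis i k))
      (fun i _ => mul_self_nonneg _) (Finset.mem_univ i₀)
  have hc_le1 : ∑ k, v k * v' k ≤ 1 := by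
    nlinarith [hc2, hcci0_le, hinner]
  -- the squared distance
  have hdiff : ∑ k, (v k - v' k) ^ 2 = 2 - 2 * ∑ k, v k * v' k := by
    have h : ∑ k, (v k - v' k) ^ 2
        = ∑ k, ((v k) ^ 2 + (v' k) ^ 2 - 2 * (v k * v' k)) :=
      Finset.sum_congr rfl fun k _ => by ring
    rw [h, Finset.sum_sub_distrib, Finset.sum_add_distrib, hv2, hv'2, ← Finset.mul_sum]
    ring
  -- Rayleigh: top eigenvalue of A + P is at least lam top - p
  have hmu_ge : lam (Fin.last (n+1)) - p ≤ mu (Fin.last (n+1)) := by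
    have hle : ∀ i, hAPH.eigenvalues i ≤ mu (Fin.last (n+1)) := by
      intro i
      obtain ⟨j, hj⟩ := hmemP i
      rw [← hj]
      exact hmu_mono (Fin.le_last j)
    have hray : ∑ k, v k * ((A+P).mulVec v) k
        = ∑ i, hAPH.eigenvalues i * ((∑ k, v k * hAPH.eigenvectorBasis i k)
          * (∑ k, v k * hAPH.eigenvectorBasis i k)) := by
      rw [hParse hAPH.eigenvectorBasis v ((A+P).mulVec v)]
      refine Finset.sum_congr rfl fun i _ => ?_
      have h1 : ∑ k, ((A+P).mulVec v) k * hAPH.eigenvectorBasis i k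
          = hAPH.eigenvalues i * ∑ k, v k * hAPH.eigenvectorBasis i k := by
        rw [sym_shift (A+P) hAPsymm v (fun k => hAPH.eigenvectorBasis i k)]
        exact hB'coef v i
      rw [h1]; ring
    have hsq1 : ∑ i, (∑ k, v k * hAPH.eigenvectorBasis i k)
        * (∑ k, v k * hAPH.eigenvectorBasis i k) = 1 := by
      rw [← hParse hAPH.eigenvectorBasis v v, ← hv2]
      exact Finset.sum_congr rfl fun k _ => (pow_two (v k)).symm
    have hray_le : ∑ k, v k * ((A+P).mulVec v) k ≤ mu (Fin.last (n+1)) := by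
      rw [hray]
      calc ∑ i, hAPH.eigenvalues i * ((∑ k, v k * hAPH.eigenvectorBasis i k)
            * (∑ k, v k * hAPH.eigenvectorBasis i k))
          ≤ ∑ i, mu (Fin.last (n+1)) * ((∑ k, v k * hAPH.eigenvectorBasis i k)
            * (∑ k, v k * hAPH.eigenvectorBasis i k)) :=
            Finset.sum_le_sum fun i _ => mul_le_mul_of_nonneg_right (hle i) (mul_self_nonneg _)
        _ = mu (Fin.last (n+1)) := by rw [← Finset.mul_sum, hsq1, mul_one]
    have hsplit : ∑ k, v k * ((A+P).mulVec v) k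
        = lam (Fin.last (n+1)) + ∑ k, v k * (P.mulVec v) k := by
      have h : ∀ k, ((A+P).mulVec v) k = (A.mulVec v) k + (P.mulVec v) k := by
        intro k; rw [Matrix.add_mulVec]; rfl
      calc ∑ k, v k * ((A+P).mulVec v) k
          = ∑ k, (v k * (A.mulVec v) k + v k * (P.mulVec v) k) :=
            Finset.sum_congr rfl fun k _ => by rw [h k]; ring
        _ = ∑ k, v k * (A.mulVec v) k + ∑ k, v k * (P.mulVec v) k := Finset.sum_add_distrib
        _ = lam (Fin.last (n+1)) + ∑ k, v k * (P.mulVec v) k := by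
            congr 1
            rw [hv]
            calc ∑ k, v k * (lam (Fin.last (n+1)) • v) k
                = lam (Fin.last (n+1)) * ∑ k, (v k)^2 := by
                  rw [Finset.mul_sum]
                  exact Finset.sum_congr rfl fun k _ => by
                    simp only [Pi.smul_apply, smul_eq_mul]; ring
              _ = lam (Fin.last (n+1)) := by rw [hv2, mul_one]
    have hvPv : -p ≤ ∑ k, v k * (P.mulVec v) k := by
      have hCS := Finset.sum_mul_sq_le_sq_mul_sq Finset.univ v (P.mulVec v)
      rw [hv2, one_mul] at hCS
      have h1 := hPsq v
      rw [hv2, mul_one] at h1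
      have hS2 : (∑ k, v k * P.mulVec v k)^2 ≤ p^2 := le_trans hCS h1
      nlinarith [hS2, hp0]
    have := hray_le
    rw [hsplit] at this
    linarith
  -- case split on the size of p
  rcases le_or_gt g (2*p) with hcase | hcase
  · have h1 : ∑ k, (v k - v' k)^2 ≤ 2 := by rw [hdiff]; linarith
    have h2 : Real.sqrt (∑ k, (v k - v' k)^2) ≤ Real.sqrt 2 := Real.sqrt_le_sqrt h1
    have h3 : Real.sqrt 2 ≤ 2 * Real.sqrt 2 * p / g := by
      rw [le_div_iff₀ hgpos]
      nlinarith [Real.sqrt_nonneg 2,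
        mul_nonneg (by linarith : (0:ℝ) ≤ 2*p - g) (Real.sqrt_nonneg 2)]
    linarith
  · -- main case : 2p < g
    have hdA_le : ∀ i, i ≠ i₀ → hAH.eigenvalues i ≤ lam ⟨n, by omega⟩ := by
      intro i hi
      obtain ⟨j, hj⟩ := hmemA i
      have hjne : j ≠ Fin.last (n+1) := by
        rintro rfl
        exact hi ((hi₀' i).mp hj)
      rw [← hj]
      exact hlam_lt j hjne
    have hrdef : ∀ k, (A.mulVec v') k - mu (Fin.last (n+1)) * v' k = -(P.mulVec v') k := by
      intro k
      have h := congrFun hv' k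
      rw [Matrix.add_mulVec] at h
      simp only [Pi.add_apply, Pi.smul_apply, smul_eq_mul] at h
      linarith
    have hrcoef : ∀ i, ∑ k, ((A.mulVec v') k - mu (Fin.last (n+1)) * v' k)
          * hAH.eigenvectorBasis i k
        = (hAH.eigenvalues i - mu (Fin.last (n+1)))
          * ∑ k, v' k * hAH.eigenvectorBasis i k := by
      intro i
      have h1 : ∑ k, (A.mulVec v') k * hAH.eigenvectorBasis i k
          = hAH.eigenvalues i * ∑ k, v' k * hAH.eigenvectorBasis i k := by
        rw [sym_shift A hA v' (fun k => hAH.eigenvectorBasis i k)]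
        exact hBcoef v' i
      calc ∑ k, ((A.mulVec v') k - mu (Fin.last (n+1)) * v' k) * hAH.eigenvectorBasis i k
          = ∑ k, (A.mulVec v') k * hAH.eigenvectorBasis i k
            - mu (Fin.last (n+1)) * ∑ k, v' k * hAH.eigenvectorBasis i k := by
            rw [Finset.mul_sum, ← Finset.sum_sub_distrib]
            exact Finset.sum_congr rfl fun k _ => by ring
        _ = _ := by rw [h1]; ring
    have hrsq : ∑ k, ((A.mulVec v') k - mu (Fin.last (n+1)) * v' k)
        * ((A.mulVec v') k - mu (Fin.last (n+1)) * v' k) ≤ p^2 := by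
      calc ∑ k, ((A.mulVec v') k - mu (Fin.last (n+1)) * v' k)
            * ((A.mulVec v') k - mu (Fin.last (n+1)) * v' k)
          = ∑ k, (P.mulVec v' k)^2 :=
            Finset.sum_congr rfl fun k _ => by rw [hrdef k]; ring
        _ ≤ p^2 * ∑ k, (v' k)^2 := hPsq v'
        _ = p^2 := by rw [hv'2, mul_one]
    have hrpar : ∑ i, ((hAH.eigenvalues i - mu (Fin.last (n+1)))
          * (∑ k, v' k * hAH.eigenvectorBasis i k))
        * ((hAH.eigenvalues i - mu (Fin.last (n+1)))
          * (∑ k, v' k * hAH.eigenvectorBasis i k)) ≤ p^2 := by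
      calc ∑ i, ((hAH.eigenvalues i - mu (Fin.last (n+1)))
            * (∑ k, v' k * hAH.eigenvectorBasis i k))
          * ((hAH.eigenvalues i - mu (Fin.last (n+1)))
            * (∑ k, v' k * hAH.eigenvectorBasis i k))
          = ∑ i, (∑ k, ((A.mulVec v') k - mu (Fin.last (n+1)) * v' k)
              * hAH.eigenvectorBasis i k)
            * (∑ k, ((A.mulVec v') k - mu (Fin.last (n+1)) * v' k)
              * hAH.eigenvectorBasis i k) :=
            Finset.sum_congr rfl fun i _ => by rw [hrcoef i]
        _ = ∑ k, ((A.mulVec v') k - mu (Fin.last (n+1)) * v' k)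
            * ((A.mulVec v') k - mu (Fin.last (n+1)) * v' k) :=
            (hParse hAH.eigenvectorBasis _ _).symm
        _ ≤ p^2 := hrsq
    have hgap : ∀ i ∈ Finset.univ.erase i₀,
        (g/2)^2 * ((∑ k, v' k * hAH.eigenvectorBasis i k)
          * (∑ k, v' k * hAH.eigenvectorBasis i k))
        ≤ ((hAH.eigenvalues i - mu (Fin.last (n+1)))
            * (∑ k, v' k * hAH.eigenvectorBasis i k))
          * ((hAH.eigenvalues i - mu (Fin.last (n+1)))
            * (∑ k, v' k * hAH.eigenvectorBasis i k)) := by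
      intro i hi
      have h1 : hAH.eigenvalues i ≤ lam ⟨n, by omega⟩ := hdA_le i (Finset.ne_of_mem_erase hi)
      have h2 : g - p ≤ mu (Fin.last (n+1)) - hAH.eigenvalues i := by
        have := hmu_ge
        rw [hg]
        linarith
      have h3 : g/2 ≤ g - p := by linarith
      have h4 : (0:ℝ) ≤ g/2 := by linarith
      have h5 : (g/2)^2 ≤ (mu (Fin.last (n+1)) - hAH.eigenvalues i)^2 := by nlinarith
      nlinarith [h5, mul_self_nonneg (∑ k, v' k * hAH.eigenvectorBasis i k)]
    have hsum_off : (g/2)^2 * (1 - (∑ k, v k * v' k)^2) ≤ p^2 := by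
      have he : ∑ i ∈ Finset.univ.erase i₀, (∑ k, v' k * hAH.eigenvectorBasis i k)
          * (∑ k, v' k * hAH.eigenvectorBasis i k) = 1 - (∑ k, v k * v' k)^2 := by
        have hadd := Finset.add_sum_erase Finset.univ
          (fun i => (∑ k, v' k * hAH.eigenvectorBasis i k)
            * (∑ k, v' k * hAH.eigenvectorBasis i k)) (Finset.mem_univ i₀)
        beta_reduce at hadd
        rw [hcc] at hadd
        linarith [hc2]
      calc (g/2)^2 * (1 - (∑ k, v k * v' k)^2)
          = ∑ i ∈ Finset.univ.erase i₀, (g/2)^2 * ((∑ k, v' k * hAH.eigenvectorBasis i k)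
            * (∑ k, v' k * hAH.eigenvectorBasis i k)) := by rw [← Finset.mul_sum, he]
        _ ≤ ∑ i ∈ Finset.univ.erase i₀, ((hAH.eigenvalues i - mu (Fin.last (n+1)))
              * (∑ k, v' k * hAH.eigenvectorBasis i k))
            * ((hAH.eigenvalues i - mu (Fin.last (n+1)))
              * (∑ k, v' k * hAH.eigenvectorBasis i k)) := Finset.sum_le_sum hgap
        _ ≤ ∑ i, ((hAH.eigenvalues i - mu (Fin.last (n+1)))
              * (∑ k, v' k * hAH.eigenvectorBasis i k))
            * ((hAH.eigenvalues i - mu (Fin.last (n+1)))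
              * (∑ k, v' k * hAH.eigenvectorBasis i k)) :=
            Finset.sum_le_sum_of_subset_of_nonneg (Finset.erase_subset _ _)
              (fun i _ _ => mul_self_nonneg _)
        _ ≤ p^2 := hrpar
    have hfinal : ∑ k, (v k - v' k)^2 ≤ (2 * Real.sqrt 2 * p / g)^2 := by
      have hgg : (0:ℝ) < g^2 := by positivity
      have h8 : (2 * Real.sqrt 2 * p / g)^2 = 8 * p^2 / g^2 := by
        rw [div_pow, mul_pow, mul_pow, Real.sq_sqrt (by norm_num : (0:ℝ) ≤ 2)]
        norm_num
      rw [hdiff, h8, le_div_iff₀ hgg]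
      nlinarith [hsum_off, hinner, hc_le1, sq_nonneg g,
        mul_nonneg (mul_nonneg hinner (sub_nonneg.mpr hc_le1)) (le_of_lt hgg)]
    have hR : (0:ℝ) ≤ 2 * Real.sqrt 2 * p / g := by positivity
    calc Real.sqrt (∑ k, (v k - v' k)^2) ≤ Real.sqrt ((2 * Real.sqrt 2 * p / g)^2) :=
          Real.sqrt_le_sqrt hfinal
      _ = 2 * Real.sqrt 2 * p / g := Real.sqrt_sq hR
end
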